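/- Let T be the span of (undecorated-polynomial, i.e. Butcher–Connes–Kreimer) decorated rooted trees with grafting products ↷_a, and suppose M : T → T is a linear map whose adjoint M* satisfies M*(σ ↷_a τ) = (M*σ) ↷_a (M*τ) for all σ, τ, a (a multi-pre-Lie morphism). Define R* by R*(ζ_l) := M*(ζ_l) on generators and R*(σ ↷_a τ) := σ ↷_a (R*τ). Then R* is well-defined (by freeness of T over the generators under the grafting operations) and is a right ⋆-morphism: R*(σ ⋆ τ) = σ ⋆ R*(τ) for all σ, τ ∈ T, where ⋆ is the Guin–Oudom product of the grafting pre-Lie structure. -/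

import Mathlib

open scoped Classical

/-! ## Decorated rooted trees (planar representatives)

`MIdx dd = ℕ^dd` are the multi-indices (`dd = d+1` in the paper); a decorated
tree `DT Θ ν dd` has at each node a polynomial decoration `k : MIdx dd` and an
optional noise label `l : Option ν` (with `none` encoding `ζ_0 = 𝟏`), and edges
decorated by `(t, p) ∈ Θ × MIdx dd` with `Θ = 𝔗⁺` the set of operator types. -/

abbrev MIdx (dd : ℕ) := Fin dd → ℕ

/-- multi-index factorial -/
def mfact {dd : ℕ} (k : MIdx dd) : ℕ := ∏ i, (k i).factorial

/-- componentwise binomial coefficient, zero unless `m ≤ k` -/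
def binomM {dd : ℕ} (k m : MIdx dd) : ℕ := ∏ i, (k i).choose (m i)

/-- decorated rooted trees -/
inductive DT (Θ ν : Type) (dd : ℕ) : Type where
  | node (k : MIdx dd) (l : Option ν) (br : List ((Θ × MIdx dd) × DT Θ ν dd)) : DT Θ ν dd

/-- the linear span `T` of decorated trees -/
abbrev TT (Θ ν : Type) (dd : ℕ) := DT Θ ν dd →₀ ℚ

variable {Θ ν : Type} {dd : ℕ}

/-- a decorated tree as an element of `T` -/
noncomputable def δ (t : DT Θ ν dd) : TT Θ ν dd := Finsupp.single t 1

/-- the tree `X^k ζ_l` -/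
def Xzeta (k : MIdx dd) (l : Option ν) : DT Θ ν dd := .node k l []

/-- the noise tree `ζ_l` (`ζ_0 = 𝟏` for `l = none`) -/
def zeta (l : Option ν) : DT Θ ν dd := .node 0 l []

/-- the planted tree `I_a(t)` -/
def Itree (a : Θ × MIdx dd) (t : DT Θ ν dd) : DT Θ ν dd := .node 0 none [(a, t)]

/-- `I_a` as a linear operation on `T` -/
noncomputable def Iext (a : Θ × MIdx dd) (f : TT Θ ν dd) : TT Θ ν dd :=
  Finsupp.mapDomain (Itree a) f

/-- combine two linear combinations through a binary map -/
noncomputable def fcomb {α β γ : Type*} (h : α → β → γ)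
    (f : α →₀ ℚ) (g : β →₀ ℚ) : γ →₀ ℚ :=
  f.sum fun a c => g.sum fun b d => Finsupp.single (h a b) (c * d)

/-! ### Deformed grafting `σ ↷_a τ` -/

mutual
/-- deformed grafting `σ ↷_a τ = Σ_{v ∈ N_τ} Σ_m binom(n_v, m) σ ↷^v_{a−m} (↑_v^{−m} τ)`
(terms with a negative edge decoration vanish) -/
noncomputable def graftT (a : Θ × MIdx dd) (σ : DT Θ ν dd) : DT Θ ν dd → TT Θ ν dd
  | .node k l br =>
      (∑ m ∈ Finset.Icc 0 k,
        if m ≤ a.2 then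
          (binomM k m : ℚ) •
            Finsupp.single (DT.node (k - m) l (br ++ [((a.1, a.2 - m), σ)])) 1
        else 0) +
      Finsupp.mapDomain (fun br' => DT.node k l br') (graftL a σ br)

/-- grafting `σ` at a node of exactly one member of a list of branches -/
noncomputable def graftL (a : Θ × MIdx dd) (σ : DT Θ ν dd) :
    List ((Θ × MIdx dd) × DT Θ ν dd) → (List ((Θ × MIdx dd) × DT Θ ν dd) →₀ ℚ)
  | [] => 0
  | (e, t) :: ts =>
      Finsupp.mapDomain (fun t' => (e, t') :: ts) (graftT a σ t) +
        Finsupp.mapDomain ((e, t) :: ·) (graftL a σ ts)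
end

/-- bilinear extension of `↷_a` -/
noncomputable def graftExt (a : Θ × MIdx dd) (f g : TT Θ ν dd) : TT Θ ν dd :=
  f.sum fun s c => g.sum fun t d => (c * d) • graftT a s t

/-- extension of `σ ↷_a ·` in its right argument -/
noncomputable def graftR (a : Θ × MIdx dd) (σ : DT Θ ν dd) (g : TT Θ ν dd) : TT Θ ν dd :=
  g.sum fun t c => c • graftT a σ t

/-! ### Raising operators `↑^k` -/

mutual
/-- `↑^k τ = Σ_{Σ_v k_v = k} ∏_v ↑_v^{k_v} τ` : distribute the multi-index `k`
over the nodes of `τ`, raising decorations -/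
noncomputable def upT (k : MIdx dd) : DT Θ ν dd → TT Θ ν dd
  | .node k0 l br =>
      ∑ m ∈ Finset.Icc 0 k,
        Finsupp.mapDomain (fun br' => DT.node (k0 + m) l br') (upL (k - m) br)

/-- distribute a multi-index over the nodes of a list of branches -/
noncomputable def upL (k : MIdx dd) :
    List ((Θ × MIdx dd) × DT Θ ν dd) → (List ((Θ × MIdx dd) × DT Θ ν dd) →₀ ℚ)
  | [] => if k = 0 then Finsupp.single [] 1 else 0
  | (e, t) :: ts =>
      ∑ m ∈ Finset.Icc 0 k,
        fcomb (fun t' ts' => (e, t') :: ts') (upT m t) (upL (k - m) ts)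
end

/-- linear extension of `↑^k` -/
noncomputable def upExt (k : MIdx dd) (g : TT Θ ν dd) : TT Θ ν dd :=
  g.sum fun t c => c • upT k t

/-! ### The deformed (Guin–Oudom) product `⋆` -/

/-- all ways of splitting a list in two complementary sublists -/
def splittings {α : Type*} : List α → List (List α × List α)
  | [] => [([], [])]
  | a :: l => (splittings l).flatMap fun p => [(a :: p.1, p.2), (p.1, a :: p.2)]

/-- deformed attachment of a list of decorated branches at a node whose
polynomial decoration is `k` ; returns the distribution over
(new node decoration, attached branches) -/
noncomputable def mgRoot : List ((Θ × MIdx dd) × DT Θ ν dd) → MIdx dd →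
    ((MIdx dd × List ((Θ × MIdx dd) × DT Θ ν dd)) →₀ ℚ)
  | [], k => Finsupp.single (k, []) 1
  | (a, σ) :: rest, k =>
      ∑ m ∈ Finset.Icc 0 k,
        if m ≤ a.2 then
          (binomM k m : ℚ) •
            Finsupp.mapDomain (fun p => (p.1, ((a.1, a.2 - m), σ) :: p.2))
              (mgRoot rest (k - m))
        else 0

mutual
/-- multi-grafting with raising: graft all decorated branches of `br` at nodes of
`τ` (each independently of the others, none onto another), simultaneously
distributing the multi-index `kup` over the nodes of `τ` -/
noncomputable def mgT (br : List ((Θ × MIdx dd) × DT Θ ν dd)) (kup : MIdx dd) :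
    DT Θ ν dd → TT Θ ν dd
  | .node k l c =>
      ((splittings br).map fun s =>
        ∑ m ∈ Finset.Icc 0 kup,
          (mgRoot s.1 k).sum fun p (cc : ℚ) =>
            cc • Finsupp.mapDomain (fun c' => DT.node (p.1 + m) l (c' ++ p.2))
              (mgL s.2 (kup - m) c)).sum

/-- distribute branches to graft and a multi-index to raise over a list of branches -/
noncomputable def mgL (br : List ((Θ × MIdx dd) × DT Θ ν dd)) (kup : MIdx dd) :
    List ((Θ × MIdx dd) × DT Θ ν dd) → (List ((Θ × MIdx dd) × DT Θ ν dd) →₀ ℚ)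
  | [] => if br = [] ∧ kup = 0 then Finsupp.single [] 1 else 0
  | (e, t) :: ts =>
      ((splittings br).map fun s =>
        ∑ m ∈ Finset.Icc 0 kup,
          fcomb (fun t' ts' => (e, t') :: ts') (mgT s.1 m t) (mgL s.2 (kup - m) ts)).sum
end

/-- the deformed product `σ ⋆ τ = ↑^k_{N_τ} (∏_i I_{a_i}(σ_i) ↷ τ)` for
`σ = X^k ∏_i I_{a_i}(σ_i)` (the root noise label of `σ` plays no role: `⋆` is
used with noise-free left factors) -/
noncomputable def star (σ τ : DT Θ ν dd) : TT Θ ν dd :=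
  match σ with
  | .node k _ br => mgT br k τ

/-- extension of `σ ⋆ ·` in its right argument -/
noncomputable def starR (σ : DT Θ ν dd) (g : TT Θ ν dd) : TT Θ ν dd :=
  g.sum fun t c => c • star σ t

/-- a tree has no noise label at its root -/
def noiseFreeRoot : DT Θ ν dd → Prop
  | .node _ l _ => l = none

/-! ### Symmetry factor, pairing, tree product -/

/-- the symmetry factor `S(X^k ζ_l ∏_j I_{a_j}(τ_j)^{β_j}) = k! ∏_j S(τ_j)^{β_j} β_j!` -/
noncomputable def symF : DT Θ ν dd → ℕ
  | .node k _ br =>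
      mfact k * (br.attach.map fun p => symF p.1.2).prod *
        (br.dedup.map fun p => (br.count p).factorial).prod
decreasing_by
  have h1 : sizeOf p.1 < 1 + sizeOf br :=
    Nat.lt_of_lt_of_le (List.sizeOf_lt_of_mem p.2) (by omega)
  cases p ; cases ‹(Θ × MIdx dd) × DT Θ ν dd› ; simp_all ; omega

/-- the pairing `⟨σ, τ⟩ = S(τ) 1_{σ = τ}`, extended bilinearly -/
noncomputable def pairT (f g : TT Θ ν dd) : ℚ :=
  f.sum fun t c => (symF t : ℚ) * c * g t

/-- tree product: joining the roots -/
def treeMul : DT Θ ν dd → DT Θ ν dd → DT Θ ν dd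
  | .node k l br, .node k' l' br' => .node (k + k') (l.orElse fun _ => l') (br ++ br')

/-- bilinear extension of the tree product to `T` -/
noncomputable def mulExt (f g : TT Θ ν dd) : TT Θ ν dd :=
  f.sum fun s c => g.sum fun t d => Finsupp.single (treeMul s t) (c * d)

/-! ### Degree and number of noises -/

/-- number of noise symbols occurring in a tree -/
def nno : DT Θ ν dd → ℕ
  | .node _ l br => (if l.isSome then 1 else 0) + (br.attach.map fun p => nno p.1.2).sum
decreasing_by
  have h1 : sizeOf p.1 < 1 + sizeOf br :=
    Nat.lt_of_lt_of_le (List.sizeOf_lt_of_mem p.2) (by omega)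
  cases p ; cases ‹(Θ × MIdx dd) × DT Θ ν dd› ; simp_all ; omega

/-- the scaled size `|k|_s` of a multi-index -/
noncomputable def absIdx (s : Fin dd → ℕ) (k : MIdx dd) : ℝ := ∑ i, (s i : ℝ) * k i

/-- degree (homogeneity) of a decorated tree, for a scaling `s`, degrees `degO`
of the operator types and degrees `degN` of the noises -/
noncomputable def degT (s : Fin dd → ℕ) (degO : Θ → ℝ) (degN : ν → ℝ) :
    DT Θ ν dd → ℝ
  | .node k l br =>
      absIdx s k + (match l with | none => 0 | some x => degN x) +
        (br.attach.map fun p =>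
          degO p.1.1.1 - absIdx s p.1.1.2 + degT s degO degN p.1.2).sum
decreasing_by
  have h1 : sizeOf p.1 < 1 + sizeOf br :=
    Nat.lt_of_lt_of_le (List.sizeOf_lt_of_mem p.2) (by omega)
  cases p ; cases ‹(Θ × MIdx dd) × DT Θ ν dd› ; simp_all ; omega

/-! ### The coefficient map `F` -/

open MvPolynomial in
/-- the operator `∂^k = Σ_a Z_{a+k} D_a` on `ℚ[Z_a]`, `a ∈ Θ × ℕ^dd` (finite sum
over the variables occurring) -/
noncomputable def delK (k : MIdx dd) (G : MvPolynomial (Θ × MIdx dd) ℚ) :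
    MvPolynomial (Θ × MIdx dd) ℚ :=
  ∑ a ∈ G.vars, X (a.1, a.2 + k) * pderiv a G

/-- the coefficient map `F` : given the data `F0 i l = F_i(ζ_l) = F_i^l`, defined
inductively by `F_i(X^k ζ_l ∏_j I_{a_j}(τ_j)) = ∂^k D_{a_1}⋯D_{a_n} F_i(ζ_l) ∏_j F_{l_j}(τ_j)` -/
noncomputable def Fmap (F0 : Θ → Option ν → MvPolynomial (Θ × MIdx dd) ℚ) (i : Θ) :
    DT Θ ν dd → MvPolynomial (Θ × MIdx dd) ℚ
  | .node k l br =>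
      delK k (br.foldr (fun p P => MvPolynomial.pderiv p.1 P) (F0 i l)) *
        (br.attach.map fun p => Fmap F0 p.1.1.1 p.1.2).prod
decreasing_by
  have h1 : sizeOf p.1 < 1 + sizeOf br :=
    Nat.lt_of_lt_of_le (List.sizeOf_lt_of_mem p.2) (by omega)
  cases p ; cases ‹(Θ × MIdx dd) × DT Θ ν dd› ; simp_all ; omega

/-- linear extension of `F` to `T` -/
noncomputable def FmapL (F0 : Θ → Option ν → MvPolynomial (Θ × MIdx dd) ℚ) (i : Θ)
    (f : TT Θ ν dd) : MvPolynomial (Θ × MIdx dd) ℚ :=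
  f.sum fun t c => c • Fmap F0 i t


section
variable {Θ ν : Type}

instance : Subsingleton (MIdx 0) := ⟨fun a b => funext fun i => i.elim0⟩

lemma midx_eq (k m : MIdx 0) : k = m := Subsingleton.elim _ _

lemma binomM0 (k m : MIdx 0) : binomM k m = 1 := by simp [binomM]

lemma Icc0 (k m : MIdx 0) : Finset.Icc k m = {0} := by
  rw [midx_eq k 0, midx_eq m 0, Finset.Icc_self]

/-- linear extension of a function on basis elements -/
noncomputable def Lx {α : Type*} {M : Type*} [AddCommMonoid M] [Module ℚ M] (F : α → M) :
    (α →₀ ℚ) →ₗ[ℚ] M :=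
  Finsupp.lsum ℚ fun t => LinearMap.toSpanSingleton ℚ M (F t)

variable {α β M N : Type*} [AddCommMonoid M] [Module ℚ M] [AddCommMonoid N] [Module ℚ N]

lemma Lx_apply (F : α → M) (g : α →₀ ℚ) : Lx F g = g.sum fun t c => c • F t := rfl

lemma Lx_single (F : α → M) (t : α) (c : ℚ) : Lx F (Finsupp.single t c) = c • F t := by
  rw [Lx_apply, Finsupp.sum_single_index]; simp

lemma Lx_delta (F : DT Θ ν 0 → M) (t : DT Θ ν 0) : Lx F (δ t) = F t := by
  rw [δ, Lx_single, one_smul]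

lemma Lx_id (g : α →₀ ℚ) : Lx (fun t => Finsupp.single t (1:ℚ)) g = g := by
  rw [Lx_apply]; simp [Finsupp.smul_single]

lemma Lx_map (Φ : M →ₗ[ℚ] N) (F : α → M) (g : α →₀ ℚ) :
    Φ (Lx F g) = Lx (fun t => Φ (F t)) g := by
  have : Φ.comp (Lx F) = Lx (fun t => Φ (F t)) := by
    apply Finsupp.lhom_ext; intro a b
    simp [Lx_single]
  exact DFunLike.congr_fun this g

lemma Lx_mapDomain (F : β → M) (h : α → β) (g : α →₀ ℚ) :
    Lx F (Finsupp.mapDomain h g) = Lx (fun t => F (h t)) g := by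
  have : (Lx F).comp (Finsupp.lmapDomain ℚ ℚ h) = Lx (fun t => F (h t)) := by
    apply Finsupp.lhom_ext; intro a b
    simp [Lx_single, Finsupp.mapDomain_single]
  simpa using DFunLike.congr_fun this g

lemma Lx_single_one (h : α → β) (g : α →₀ ℚ) :
    Lx (fun t => Finsupp.single (h t) (1:ℚ)) g = Finsupp.mapDomain h g := by
  rw [← Lx_mapDomain (fun t => Finsupp.single t (1:ℚ)) h g, Lx_id]

lemma Lx_congr {F F' : α → M} {g : α →₀ ℚ} (h : ∀ t ∈ g.support, F t = F' t) :
    Lx F g = Lx F' g := by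
  rw [Lx_apply, Lx_apply]; exact Finsupp.sum_congr fun t ht => by rw [h t ht]

lemma Lx_add_fun (F G : α → M) (g : α →₀ ℚ) :
    Lx (fun t => F t + G t) g = Lx F g + Lx G g := by
  rw [Lx_apply, Lx_apply, Lx_apply, ← Finsupp.sum_add]
  exact Finsupp.sum_congr fun t _ => smul_add _ _ _

lemma Lx_smul_fun (c : ℚ) (F : α → M) (g : α →₀ ℚ) :
    Lx (fun t => c • F t) g = c • Lx F g := by
  rw [Lx_apply, Lx_apply, Finsupp.smul_sum]
  exact Finsupp.sum_congr fun t _ => smul_comm _ _ _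

lemma Lx_swap (H : β → α → M) (f : α →₀ ℚ) (g : β →₀ ℚ) :
    Lx (fun t => Lx (fun b => H b t) g) f = Lx (fun b => Lx (H b) f) g := by
  simp only [Lx_apply, Finsupp.smul_sum]
  rw [Finsupp.sum_comm]
  exact Finsupp.sum_congr fun t _ => Finsupp.sum_congr fun b _ => smul_comm _ _ _

lemma fcomb_eq {γ : Type*} (h : α → β → γ) (f : α →₀ ℚ) (g : β →₀ ℚ) :
    fcomb h f g = Lx (fun a => Lx (fun b => Finsupp.single (h a b) (1:ℚ)) g) f := by
  simp only [fcomb, Lx_apply, Finsupp.smul_sum, Finsupp.smul_single]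
  exact Finsupp.sum_congr fun t _ => Finsupp.sum_congr fun b _ => by
    rw [smul_eq_mul, smul_eq_mul, mul_one]

end

section
variable {Θ ν : Type}

/-- branch type -/
local notation "B" => ((Θ × MIdx 0) × DT Θ ν 0)

lemma graftT_eq (a : Θ × MIdx 0) (σ : DT Θ ν 0) (k : MIdx 0) (l : Option ν)
    (br : List B) :
    graftT a σ (DT.node k l br) = Finsupp.single (DT.node k l (br ++ [(a, σ)])) 1
      + Finsupp.mapDomain (fun br' => DT.node k l br') (graftL a σ br) := by
  rw [graftT, Icc0, Finset.sum_singleton, if_pos (le_of_eq (midx_eq _ _)),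
    binomM0, midx_eq (k-0) k, midx_eq (a.2-0) a.2]
  simp

lemma graftL_nil (a : Θ × MIdx 0) (σ : DT Θ ν 0) : graftL a σ ([] : List B) = 0 := by
  rw [graftL]

lemma graftL_cons (a : Θ × MIdx 0) (σ : DT Θ ν 0) (e : Θ × MIdx 0) (t : DT Θ ν 0)
    (ts : List B) :
    graftL a σ ((e, t) :: ts) =
      Finsupp.mapDomain (fun t' => (e, t') :: ts) (graftT a σ t) +
        Finsupp.mapDomain ((e, t) :: ·) (graftL a σ ts) := by
  rw [graftL]

lemma mgRoot_eq (s : List B) (k : MIdx 0) : mgRoot s k = Finsupp.single (k, s) 1 := by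
  induction s with
  | nil => rw [mgRoot]
  | cons b rest ih =>
      obtain ⟨a, σ⟩ := b
      rw [mgRoot, Icc0, Finset.sum_singleton, if_pos (le_of_eq (midx_eq _ _)), binomM0,
        midx_eq (k-0) k, midx_eq (a.2-0) a.2, ih]
      simp [Finsupp.mapDomain_single]

lemma mgT_eq (bs : List B) (kup : MIdx 0) (k : MIdx 0) (l : Option ν) (c : List B) :
    mgT bs kup (DT.node k l c) =
      ((splittings bs).map fun s =>
        Finsupp.mapDomain (fun c' => DT.node k l (c' ++ s.1)) (mgL s.2 0 c)).sum := by
  rw [mgT]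
  congr 1
  apply List.map_congr_left
  intro s _
  rw [Icc0, Finset.sum_singleton, mgRoot_eq, Finsupp.sum_single_index]
  · rw [one_smul, midx_eq (k + 0) k, midx_eq (kup - 0) 0]
  · simp

lemma mgL_nil (bs : List B) (kup : MIdx 0) :
    mgL bs kup ([] : List B) = if bs = [] then Finsupp.single [] 1 else 0 := by
  rw [mgL]
  by_cases h : bs = [] <;> simp [h, midx_eq kup 0]

lemma mgL_cons (bs : List B) (kup : MIdx 0) (e : Θ × MIdx 0) (t : DT Θ ν 0) (ts : List B) :
    mgL bs kup ((e, t) :: ts) =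
      ((splittings bs).map fun s =>
        fcomb (fun t' ts' => (e, t') :: ts') (mgT s.1 0 t) (mgL s.2 0 ts)).sum := by
  rw [mgL]
  congr 1
  apply List.map_congr_left
  intro s _
  rw [Icc0, Finset.sum_singleton, midx_eq (kup - 0) 0]

end

section
variable {Θ ν : Type}

local notation "B" => ((Θ × MIdx 0) × DT Θ ν 0)

section SSum
variable {α : Type*} {M : Type*} [AddCommMonoid M]

/-- sum over all splittings -/
def SSum (bs : List α) (F : List α × List α → M) : M := ((splittings bs).map F).sum

lemma flatMap_pair_sum (l : List (List α × List α)) (g h : List α × List α → List α × List α)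
    (F : List α × List α → M) :
    ((l.flatMap fun p => [g p, h p]).map F).sum = (l.map fun p => F (g p) + F (h p)).sum := by
  induction l with
  | nil => simp
  | cons p l ih => simp [ih]; abel

lemma SSum_nil (F : List α × List α → M) : SSum [] F = F ([], []) := by
  simp [SSum, splittings]

lemma SSum_cons (a : α) (u : List α) (F : List α × List α → M) :
    SSum (a :: u) F = SSum u (fun p => F (a :: p.1, p.2) + F (p.1, a :: p.2)) := by
  unfold SSum
  rw [splittings]
  exact flatMap_pair_sum _ _ _ _


lemma SSum_add (bs : List α) (F G : List α × List α → M) :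
    SSum bs (fun p => F p + G p) = SSum bs F + SSum bs G := by
  unfold SSum
  induction splittings bs with
  | nil => simp
  | cons p l ih => simp [ih]; abel

lemma SSum_congr (bs : List α) {F G : List α × List α → M} (h : ∀ p, F p = G p) :
    SSum bs F = SSum bs G := by
  unfold SSum; exact congrArg _ (List.map_congr_left fun p _ => h p)

lemma SSum_concat (b : α) (u : List α) (F : List α × List α → M) :
    SSum (u ++ [b]) F = SSum u (fun p => F (p.1 ++ [b], p.2) + F (p.1, p.2 ++ [b])) := by
  induction u generalizing F with
  | nil => simp [SSum_cons, SSum_nil]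
  | cons a u ih =>
      rw [List.cons_append, SSum_cons, ih, SSum_cons]
      apply SSum_congr
      intro p
      simp only [List.cons_append]
      abel

lemma SSum_eval (bs : List α) (F : List α × List α → M)
    (h : ∀ p : List α × List α, p.2 ≠ [] → F p = 0) :
    SSum bs F = F (bs, []) := by
  induction bs generalizing F with
  | nil => exact SSum_nil F
  | cons a u ih =>
      rw [SSum_cons]
      have : SSum u (fun p => F (a :: p.1, p.2) + F (p.1, a :: p.2))
          = SSum u (fun p => F (a :: p.1, p.2)) := by
        apply SSum_congr; intro p; rw [h (p.1, a :: p.2) (by simp)]; simp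
      rw [this, ih (fun p => F (a :: p.1, p.2)) (fun p hp => h _ hp)]

lemma SSum_map {N : Type*} [AddCommMonoid N] [Module ℚ M] [Module ℚ N]
    (Φ : M →ₗ[ℚ] N) (bs : List α) (F : List α × List α → M) :
    Φ (SSum bs F) = SSum bs (fun p => Φ (F p)) := by
  unfold SSum
  rw [map_list_sum, List.map_map]
  rfl

end SSum

/-- restatement of mgT/mgL in SSum form -/
lemma mgT_eq' (bs : List B) (kup : MIdx 0) (k : MIdx 0) (l : Option ν) (c : List B) :
    mgT bs kup (DT.node k l c) =
      SSum bs (fun s => Finsupp.mapDomain (fun c' => DT.node k l (c' ++ s.1)) (mgL s.2 0 c)) :=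
  mgT_eq bs kup k l c

lemma mgL_cons' (bs : List B) (kup : MIdx 0) (e : Θ × MIdx 0) (t : DT Θ ν 0) (ts : List B) :
    mgL bs kup ((e, t) :: ts) =
      SSum bs (fun s => fcomb (fun t' ts' => (e, t') :: ts') (mgT s.1 0 t) (mgL s.2 0 ts)) :=
  mgL_cons bs kup e t ts

mutual
theorem mgT_unit (τ : DT Θ ν 0) : mgT [] 0 τ = δ τ := by
  obtain ⟨k, l, c⟩ := τ
  rw [mgT_eq', SSum_nil, mgL_unit c, Finsupp.mapDomain_single]
  simp [δ]
termination_by sizeOf τ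
decreasing_by all_goals (simp; try omega)

theorem mgL_unit (c : List B) : mgL [] 0 c = Finsupp.single c 1 := by
  match c with
  | [] => rw [mgL_nil]; simp
  | (e, t) :: ts =>
      rw [mgL_cons', SSum_nil, mgT_unit t, mgL_unit ts, δ, fcomb_eq, Lx_single, Lx_single]
      simp
termination_by sizeOf c
decreasing_by all_goals (simp; try omega)
end

end

section
variable {Θ ν : Type}

local notation "B" => ((Θ × MIdx 0) × DT Θ ν 0)

lemma Lx_list_sum {α γ M : Type*} [AddCommMonoid M] [Module ℚ M]
    (l : List γ) (H : α → γ → M) (w : α →₀ ℚ) :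
    Lx (fun y => (l.map (H y)).sum) w = (l.map (fun p => Lx (fun y => H y p) w)).sum := by
  induction l with
  | nil => simp [Lx_apply]
  | cons p l ih =>
      simp only [List.map_cons, List.sum_cons]
      rw [Lx_add_fun, ih]

lemma Lx_SSum {α' α M : Type*} [AddCommMonoid M] [Module ℚ M]
    (u : List α) (H : α' → List α × List α → M) (w : α' →₀ ℚ) :
    Lx (fun y => SSum u (fun p => H y p)) w = SSum u (fun p => Lx (fun y => H y p) w) := by
  unfold SSum; exact Lx_list_sum _ _ _

lemma graftL_append (a : Θ × MIdx 0) (x : DT Θ ν 0) (u v : List B) :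
    graftL a x (u ++ v) = Finsupp.mapDomain (· ++ v) (graftL a x u)
      + Finsupp.mapDomain (u ++ ·) (graftL a x v) := by
  induction u with
  | nil =>
      simp only [List.nil_append, graftL_nil, Finsupp.mapDomain_zero, zero_add]
      exact (Finsupp.mapDomain_id).symm
  | cons b ts ih =>
      obtain ⟨e, t⟩ := b
      rw [List.cons_append, graftL_cons, graftL_cons, ih]
      simp only [Finsupp.mapDomain_add, ← Finsupp.mapDomain_comp]
      rw [add_assoc]
      congr 1

lemma graftL_len (a : Θ × MIdx 0) (x : DT Θ ν 0) :
    ∀ (bs : List B) (u : List B), u ∈ (graftL a x bs).support → u.length = bs.length := by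
  intro bs
  induction bs with
  | nil => intro u hu; rw [graftL_nil] at hu; simp at hu
  | cons b ts ih =>
      obtain ⟨e, t⟩ := b
      intro u hu
      rw [graftL_cons] at hu
      rcases Finset.mem_union.mp (Finsupp.support_add hu) with h | h
      · obtain ⟨w, _, rfl⟩ := Finset.mem_image.mp (Finsupp.mapDomain_support h)
        simp
      · obtain ⟨w, hw, rfl⟩ := Finset.mem_image.mp (Finsupp.mapDomain_support h)
        simp [ih w hw]

lemma SG {M : Type*} [AddCommMonoid M] [Module ℚ M] (a : Θ × MIdx 0) (x : DT Θ ν 0) :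
    ∀ (bs : List B) (G : List B → List B → M),
    Lx (fun bs' => SSum bs' (fun S => G S.1 S.2)) (graftL a x bs)
      = SSum bs (fun s => Lx (fun s1' => G s1' s.2) (graftL a x s.1)
          + Lx (fun s2' => G s.1 s2') (graftL a x s.2)) := by
  intro bs
  induction bs with
  | nil =>
      intro G
      rw [graftL_nil, map_zero, SSum_nil, graftL_nil, map_zero, map_zero, add_zero]
  | cons b ts ih =>
      obtain ⟨e, t⟩ := b
      intro G
      rw [graftL_cons, map_add, Lx_mapDomain, Lx_mapDomain]
      simp only [SSum_cons]
      rw [Lx_SSum, ih (fun u v => G ((e,t) :: u) v + G u ((e,t) :: v))]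
      rw [← SSum_add]
      apply SSum_congr
      intro p
      simp only [Lx_add_fun, graftL_cons, map_add, Lx_mapDomain]
      abel

end

section
variable {Θ ν : Type} {α β γ M N : Type*} [AddCommMonoid M] [Module ℚ M]
  [AddCommMonoid N] [Module ℚ N]

lemma Lx_zero_fun (g : α →₀ ℚ) : Lx (fun _ => (0 : M)) g = 0 := by
  rw [Lx_apply]; simp

lemma Lx_Lx (F : β → M) (G : α → (β →₀ ℚ)) (w : α →₀ ℚ) :
    Lx F (Lx G w) = Lx (fun y => Lx F (G y)) w := Lx_map (Lx F) G w

lemma Lx_mapDomain_out (h : β → γ) (F : α → (β →₀ ℚ)) (w : α →₀ ℚ) :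
    Lx (fun y => Finsupp.mapDomain h (F y)) w = Finsupp.mapDomain h (Lx F w) :=
  (Lx_map (Finsupp.lmapDomain ℚ ℚ h) F w).symm

lemma Lx_mapDomain_swap (h : α → β → γ) (w : α →₀ ℚ) (W : β →₀ ℚ) :
    Lx (fun y => Finsupp.mapDomain (fun u => h y u) W) w
      = Lx (fun u => Finsupp.mapDomain (fun y => h y u) w) W := by
  simp only [← Lx_single_one]
  exact Lx_swap (fun u y => Finsupp.single (h y u) (1:ℚ)) w W

lemma fcomb_comm' (h : α → β → γ) (f : α →₀ ℚ) (g : β →₀ ℚ) :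
    fcomb h f g = Lx (fun b => Finsupp.mapDomain (fun a' => h a' b) f) g := by
  rw [fcomb_eq]
  rw [Lx_swap (fun b a' => Finsupp.single (h a' b) (1:ℚ)) f g]
  simp only [Lx_single_one]

lemma fcomb_eq' (h : α → β → γ) (f : α →₀ ℚ) (g : β →₀ ℚ) :
    fcomb h f g = Lx (fun a => Finsupp.mapDomain (h a) g) f := by
  rw [fcomb_eq]; simp only [Lx_single_one]

lemma fcomb_left_Lx (h : α → β → γ) (G : α' → (α →₀ ℚ)) (u : α' →₀ ℚ) (g : β →₀ ℚ)
    {α' : Type*} : fcomb h (Lx G u) g = Lx (fun y => fcomb h (G y) g) u := by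
  rw [fcomb_eq', Lx_Lx]
  exact Lx_congr fun y _ => (fcomb_eq' h (G y) g).symm

lemma fcomb_right_Lx {α' : Type*} (h : α → β → γ) (f : α →₀ ℚ) (G : α' → (β →₀ ℚ))
    (u : α' →₀ ℚ) : fcomb h f (Lx G u) = Lx (fun y => fcomb h f (G y)) u := by
  rw [fcomb_comm', Lx_Lx]
  exact Lx_congr fun y _ => (fcomb_comm' h f (G y)).symm

end

section
variable {Θ ν : Type}

local notation "B" => ((Θ × MIdx 0) × DT Θ ν 0)


theorem GOrecT_node (a : Θ × MIdx 0) (x : DT Θ ν 0) (k : MIdx 0) (l : Option ν)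
    (c : List B)
    (IHc : ∀ bs : List B,
      Lx (graftL a x) (mgL bs 0 c) = mgL (bs ++ [(a,x)]) 0 c
        + Lx (fun bs' => mgL bs' 0 c) (graftL a x bs)) :
    ∀ bs : List B,
    Lx (graftT a x) (mgT bs 0 (DT.node k l c)) = mgT (bs ++ [(a,x)]) 0 (DT.node k l c)
      + Lx (fun bs' => mgT bs' 0 (DT.node k l c)) (graftL a x bs) := by
  intro bs
  rw [mgT_eq' bs, SSum_map, mgT_eq' (bs ++ [(a,x)]), SSum_concat]
  have hT2 : Lx (fun bs' => mgT bs' 0 (DT.node k l c)) (graftL a x bs)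
      = SSum bs (fun s =>
          Lx (fun s1' => Finsupp.mapDomain (fun c' => DT.node k l (c' ++ s1'))
            (mgL s.2 0 c)) (graftL a x s.1)
        + Lx (fun s2' => Finsupp.mapDomain (fun c' => DT.node k l (c' ++ s.1))
            (mgL s2' 0 c)) (graftL a x s.2)) := by
    simp only [mgT_eq']
    exact SG a x bs (fun u v => Finsupp.mapDomain (fun c' => DT.node k l (c' ++ u)) (mgL v 0 c))
  rw [hT2, ← SSum_add]
  apply SSum_congr
  intro p
  dsimp only
  rw [Lx_mapDomain]
  simp only [graftT_eq, graftL_append, Finsupp.mapDomain_add, ← Finsupp.mapDomain_comp,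
    Function.comp_def, Lx_add_fun]
  rw [Lx_single_one, Lx_mapDomain_out, IHc p.2, Finsupp.mapDomain_add,
    ← Lx_mapDomain_out, Lx_mapDomain_swap]
  simp only [List.append_assoc]
  abel


theorem GOrecL_cons (a : Θ × MIdx 0) (x : DT Θ ν 0) (e : Θ × MIdx 0) (t : DT Θ ν 0)
    (ts : List B)
    (IHt : ∀ bs : List B,
      Lx (graftT a x) (mgT bs 0 t) = mgT (bs ++ [(a,x)]) 0 t
        + Lx (fun bs' => mgT bs' 0 t) (graftL a x bs))
    (IHts : ∀ bs : List B,
      Lx (graftL a x) (mgL bs 0 ts) = mgL (bs ++ [(a,x)]) 0 ts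
        + Lx (fun bs' => mgL bs' 0 ts) (graftL a x bs)) :
    ∀ bs : List B,
    Lx (graftL a x) (mgL bs 0 ((e,t) :: ts)) = mgL (bs ++ [(a,x)]) 0 ((e,t) :: ts)
      + Lx (fun bs' => mgL bs' 0 ((e,t) :: ts)) (graftL a x bs) := by
  intro bs
  rw [mgL_cons' bs, SSum_map, mgL_cons' (bs ++ [(a,x)]), SSum_concat]
  have hT2 : Lx (fun bs' => mgL bs' 0 ((e,t) :: ts)) (graftL a x bs)
      = SSum bs (fun s =>
          Lx (fun s1' => fcomb (fun t' ts' => (e,t')::ts') (mgT s1' 0 t)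
            (mgL s.2 0 ts)) (graftL a x s.1)
        + Lx (fun s2' => fcomb (fun t' ts' => (e,t')::ts') (mgT s.1 0 t)
            (mgL s2' 0 ts)) (graftL a x s.2)) := by
    simp only [mgL_cons']
    exact SG a x bs (fun u v => fcomb (fun t' ts' => (e,t')::ts') (mgT u 0 t) (mgL v 0 ts))
  rw [hT2, ← SSum_add]
  apply SSum_congr
  intro p
  dsimp only
  rw [fcomb_eq', Lx_Lx]
  simp only [Lx_mapDomain, graftL_cons, Lx_add_fun]
  -- T1 transformation
  have hT1 : (Lx fun t' => (Lx fun ts' =>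
        Finsupp.mapDomain (fun t'' => (e,t'')::ts') (graftT a x t')) (mgL p.2 0 ts))
        (mgT p.1 0 t)
      = Lx (fun t'' => Finsupp.mapDomain (fun ts' => (e,t'')::ts') (mgL p.2 0 ts))
          (Lx (graftT a x) (mgT p.1 0 t)) := by
    rw [Lx_Lx]
    exact Lx_congr fun t' _ => Lx_mapDomain_swap (fun ts' t'' => (e,t'')::ts') _ _
  rw [hT1, IHt p.1, map_add, Lx_Lx]
  -- T2 transformation
  have hT2a : (Lx fun t' => (Lx fun ts' =>
        Finsupp.mapDomain (fun ts'' => (e,t')::ts'') (graftL a x ts')) (mgL p.2 0 ts))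
        (mgT p.1 0 t)
      = Lx (fun t' => Finsupp.mapDomain (fun ts'' => (e,t')::ts'')
          (Lx (graftL a x) (mgL p.2 0 ts))) (mgT p.1 0 t) :=
    Lx_congr fun t' _ => Lx_mapDomain_out _ _ _
  rw [hT2a, IHts p.2]
  simp only [Finsupp.mapDomain_add, Lx_add_fun]
  rw [Lx_mapDomain_swap (fun t' ts'' => (e,t')::ts''),
    Lx_mapDomain_swap (fun t' ts'' => (e,t')::ts'') (mgT p.1 0 t)
      ((Lx fun bs' => mgL bs' 0 ts) (graftL a x p.2)),
    Lx_Lx]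
  rw [fcomb_comm' (fun t' ts' => (e,t')::ts') (mgT (p.1 ++ [(a,x)]) 0 t) (mgL p.2 0 ts),
    fcomb_eq' (fun t' ts' => (e,t')::ts') (mgT p.1 0 t) (mgL (p.2 ++ [(a,x)]) 0 ts)]
  have hR3 : (Lx fun s1' => fcomb (fun t' ts' => (e,t')::ts') (mgT s1' 0 t) (mgL p.2 0 ts))
        (graftL a x p.1)
      = Lx (fun s1' => Lx (fun t'' => Finsupp.mapDomain (fun ts' => (e,t'')::ts')
          (mgL p.2 0 ts)) (mgT s1' 0 t)) (graftL a x p.1) :=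
    Lx_congr fun s1' _ => fcomb_eq' _ _ _
  have hR4 : (Lx fun s2' => fcomb (fun t' ts' => (e,t')::ts') (mgT p.1 0 t) (mgL s2' 0 ts))
        (graftL a x p.2)
      = Lx (fun s2' => Lx (fun ts'' => Finsupp.mapDomain (fun t' => (e,t')::ts'')
          (mgT p.1 0 t)) (mgL s2' 0 ts)) (graftL a x p.2) :=
    Lx_congr fun s2' _ => fcomb_comm' _ _ _
  rw [hR3, hR4]
  abel


theorem GOrecL_nil (a : Θ × MIdx 0) (x : DT Θ ν 0) :
    ∀ bs : List B,
    Lx (graftL a x) (mgL bs 0 ([] : List B)) = mgL (bs ++ [(a,x)]) 0 ([] : List B)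
      + Lx (fun bs' => mgL bs' 0 ([] : List B)) (graftL a x bs) := by
  intro bs
  by_cases h : bs = []
  · subst h
    rw [graftL_nil, mgL_nil, if_pos rfl, Lx_single, mgL_nil, if_neg (by simp)]
    simp [graftL_nil]
  · rw [mgL_nil, if_neg h, map_zero, mgL_nil, if_neg (by simp), zero_add]
    have h0 : Lx (fun bs' => mgL bs' 0 ([] : List B)) (graftL a x bs)
        = Lx (fun _ => (0 : (List B) →₀ ℚ)) (graftL a x bs) := by
      apply Lx_congr
      intro u hu
      have hlen := graftL_len a x bs u hu
      rw [mgL_nil, if_neg]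
      intro h0
      exact h (List.length_eq_zero_iff.mp (h0 ▸ hlen).symm)
    rw [h0, Lx_zero_fun]

theorem GOrec_fuel (a : Θ × MIdx 0) (x : DT Θ ν 0) (n : ℕ) :
    (∀ τ : DT Θ ν 0, sizeOf τ ≤ n → ∀ bs : List B,
      Lx (graftT a x) (mgT bs 0 τ) = mgT (bs ++ [(a,x)]) 0 τ
        + Lx (fun bs' => mgT bs' 0 τ) (graftL a x bs)) ∧
    (∀ c : List B, sizeOf c ≤ n → ∀ bs : List B,
      Lx (graftL a x) (mgL bs 0 c) = mgL (bs ++ [(a,x)]) 0 c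
        + Lx (fun bs' => mgL bs' 0 c) (graftL a x bs)) := by
  induction n with
  | zero =>
      constructor
      · intro τ hτ; exfalso; obtain ⟨k, l, c⟩ := τ; simp at hτ
      · intro c hc; exfalso; cases c <;> simp at hc
  | succ n ih =>
      constructor
      · intro τ hτ
        obtain ⟨k, l, c⟩ := τ
        refine GOrecT_node a x k l c (ih.2 c ?_)
        simp at hτ; omega
      · intro c hc
        match c with
        | [] => exact GOrecL_nil a x
        | (e, t) :: ts =>
            refine GOrecL_cons a x e t ts (ih.1 t ?_) (ih.2 ts ?_) <;>
              (simp at hc; omega)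

theorem GOrecT (a : Θ × MIdx 0) (x : DT Θ ν 0) (τ : DT Θ ν 0) :
    ∀ bs : List B,
    Lx (graftT a x) (mgT bs 0 τ) = mgT (bs ++ [(a,x)]) 0 τ
      + Lx (fun bs' => mgT bs' 0 τ) (graftL a x bs) :=
  (GOrec_fuel a x (sizeOf τ)).1 τ le_rfl

theorem GOrecL (a : Θ × MIdx 0) (x : DT Θ ν 0) (c : List B) :
    ∀ bs : List B,
    Lx (graftL a x) (mgL bs 0 c) = mgL (bs ++ [(a,x)]) 0 c
      + Lx (fun bs' => mgL bs' 0 c) (graftL a x bs) :=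
  (GOrec_fuel a x (sizeOf c)).2 c le_rfl

end

section
variable {Θ ν : Type}

local notation "B" => ((Θ × MIdx 0) × DT Θ ν 0)

lemma graftR_eq (a : Θ × MIdx 0) (σ : DT Θ ν 0) (g : TT Θ ν 0) :
    graftR a σ g = Lx (graftT a σ) g := rfl

lemma starR_eq (σ : DT Θ ν 0) (g : TT Θ ν 0) : starR σ g = Lx (star σ) g := rfl

lemma star_eq (k : MIdx 0) (l : Option ν) (bs : List B) (τ : DT Θ ν 0) :
    star (DT.node k l bs) τ = mgT bs 0 τ := by
  have h0 : star (DT.node k l bs) τ = mgT bs k τ := rfl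
  rw [h0, midx_eq k 0]

lemma Lx_delta_id (g : TT Θ ν 0) : Lx δ g = g := Lx_id g

lemma delta_node (k : MIdx 0) (l : Option ν) (br : List B) :
    δ (DT.node k l br) = mgT br 0 (zeta l) := by
  rw [zeta, mgT_eq']
  rw [SSum_eval br _ (fun p hp => by rw [mgL_nil, if_neg hp, Finsupp.mapDomain_zero])]
  rw [mgL_nil, if_pos rfl, Finsupp.mapDomain_single, List.nil_append, δ, midx_eq 0 k]

/-- the explicit formula for `R*` on trees -/
noncomputable def vmap (Ms : TT Θ ν 0 →ₗ[ℚ] TT Θ ν 0) : DT Θ ν 0 → TT Θ ν 0 :=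
  fun τ => match τ with
  | .node _ l br => Lx (fun u => mgT br 0 u) (Ms (δ (zeta l)))

lemma vmap_node (Ms : TT Θ ν 0 →ₗ[ℚ] TT Θ ν 0) (k : MIdx 0) (l : Option ν) (br : List B) :
    vmap Ms (DT.node k l br) = Lx (fun u => mgT br 0 u) (Ms (δ (zeta l))) := rfl

section RsProps
variable (Rs : TT Θ ν 0 →ₗ[ℚ] TT Θ ν 0)
  (hgraft : ∀ (a : Θ × MIdx 0) (σ τ : DT Θ ν 0),
    Rs (graftT a σ τ) = graftR a σ (Rs (δ τ)))

include hgraft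

lemma Rs_commute (a : Θ × MIdx 0) (σ : DT Θ ν 0) (g : TT Θ ν 0) :
    Rs (Lx (graftT a σ) g) = Lx (graftT a σ) (Rs g) := by
  rw [Lx_map Rs]
  rw [Lx_congr (fun t _ => (hgraft a σ t).trans (graftR_eq a σ (Rs (δ t))))]
  rw [← Lx_map (Lx (graftT a σ)) (fun t => Rs (δ t)) g, ← Lx_map Rs δ g, Lx_delta_id]

lemma master : ∀ (n : ℕ) (bs : List B), bs.length = n → ∀ τ : DT Θ ν 0,
    Rs (mgT bs 0 τ) = Lx (fun t => mgT bs 0 t) (Rs (δ τ)) := by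
  intro n
  induction n with
  | zero =>
      intro bs hbs τ
      rw [List.length_eq_zero_iff.mp hbs, mgT_unit,
        Lx_congr (fun t _ => mgT_unit t), Lx_delta_id]
  | succ n ih =>
      intro bs hbs τ
      rcases List.eq_nil_or_concat bs with rfl | ⟨bs₀, b, rfl⟩
      · simp at hbs
      obtain ⟨a, x⟩ := b
      rw [List.concat_eq_append] at hbs ⊢
      have hlen : bs₀.length = n := by simpa using hbs
      -- eq1 : from GOrecT applied to τ
      have eq1 : Rs (Lx (graftT a x) (mgT bs₀ 0 τ))
          = Rs (mgT (bs₀ ++ [(a,x)]) 0 τ)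
            + Rs (Lx (fun bs' => mgT bs' 0 τ) (graftL a x bs₀)) := by
        rw [GOrecT a x τ bs₀, map_add]
      -- eq2 : transform LHS of eq1
      have eq2 : Rs (Lx (graftT a x) (mgT bs₀ 0 τ))
          = Lx (fun t => mgT (bs₀ ++ [(a,x)]) 0 t) (Rs (δ τ))
            + Lx (fun bs' => Lx (fun t => mgT bs' 0 t) (Rs (δ τ))) (graftL a x bs₀) := by
        rw [Rs_commute Rs hgraft, ih bs₀ hlen τ, Lx_Lx,
          Lx_congr (fun t _ => GOrecT a x t bs₀), Lx_add_fun,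
          Lx_swap (fun bs' t => mgT bs' 0 t) (Rs (δ τ)) (graftL a x bs₀)]
      -- eq3 : transform the correction term
      have eq3 : Rs (Lx (fun bs' => mgT bs' 0 τ) (graftL a x bs₀))
          = Lx (fun bs' => Lx (fun t => mgT bs' 0 t) (Rs (δ τ))) (graftL a x bs₀) := by
        rw [Lx_map Rs]
        exact Lx_congr fun bs' hbs' => ih bs' ((graftL_len a x bs₀ bs' hbs').trans hlen) τ
      rw [eq2, eq3] at eq1
      exact (add_right_cancel eq1).symm

end RsProps

end

section
variable {Θ ν : Type}

local notation "B" => ((Θ × MIdx 0) × DT Θ ν 0)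

variable (Ms : TT Θ ν 0 →ₗ[ℚ] TT Θ ν 0)

lemma Rs0_zeta (l : Option ν) : Lx (vmap Ms) (δ (zeta l)) = Ms (δ (zeta l)) := by
  rw [Lx_delta, zeta, vmap_node, Lx_congr (fun t _ => mgT_unit t), Lx_delta_id, zeta]

lemma Rs0_graft (a : Θ × MIdx 0) (σ τ : DT Θ ν 0) :
    Lx (vmap Ms) (graftT a σ τ) = graftR a σ (Lx (vmap Ms) (δ τ)) := by
  obtain ⟨k, l, bτ⟩ := τ
  rw [graftT_eq, map_add, Lx_single, one_smul, vmap_node, Lx_mapDomain,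
    Lx_congr (fun bs' _ => vmap_node Ms k l bs'),
    Lx_delta, vmap_node, graftR_eq, Lx_Lx,
    Lx_congr (fun u _ => GOrecT a σ u bτ), Lx_add_fun,
    Lx_swap (fun bs' u => mgT bs' 0 u) (Ms (δ (zeta l))) (graftL a σ bτ)]

/-- any `Rs` with the two properties agrees with the explicit one -/
lemma Rs_unique (Rs : TT Θ ν 0 →ₗ[ℚ] TT Θ ν 0)
    (h1 : ∀ l : Option ν, Rs (δ (zeta l)) = Ms (δ (zeta l)))
    (h2 : ∀ (a : Θ × MIdx 0) (σ τ : DT Θ ν 0),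
      Rs (graftT a σ τ) = graftR a σ (Rs (δ τ))) :
    Rs = Lx (vmap Ms) := by
  have key : ∀ τ : DT Θ ν 0, Rs (δ τ) = vmap Ms τ := by
    intro τ
    obtain ⟨k, l, br⟩ := τ
    rw [delta_node, master Rs h2 br.length br rfl (zeta l), h1 l, vmap_node]
  apply Finsupp.lhom_ext
  intro t c
  have hs : Finsupp.single t c = c • δ t := by rw [δ, Finsupp.smul_single, smul_eq_mul, mul_one]
  rw [hs, map_smul, map_smul, key t, Lx_delta]

lemma Rs_starmor (Rs : TT Θ ν 0 →ₗ[ℚ] TT Θ ν 0)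
    (h2 : ∀ (a : Θ × MIdx 0) (σ τ : DT Θ ν 0),
      Rs (graftT a σ τ) = graftR a σ (Rs (δ τ))) (σ τ : DT Θ ν 0) :
    Rs (star σ τ) = starR σ (Rs (δ τ)) := by
  obtain ⟨k, l, bσ⟩ := σ
  rw [star_eq, master Rs h2 bσ.length bσ rfl τ, starR_eq,
    Lx_congr (fun t _ => (star_eq k l bσ t).symm)]

end


/-- Corollary 3.7: in the Butcher–Connes–Kreimer setting (no
polynomial decorations, encoded by `dd = 0`, so there is no deformation), given
a linear map `M` whose adjoint `M*` is a multi-pre-Lie morphism, the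
prescription `R*(ζ_l) := M*(ζ_l)`, `R*(σ ↷_a τ) := σ ↷_a (R* τ)` defines a
unique linear map `R*`, and any such map is a right `⋆`-morphism:
`R*(σ ⋆ τ) = σ ⋆ R*(τ)`. -/
theorem stmt_16 {Θ ν : Type} (M Ms : TT Θ ν 0 →ₗ[ℚ] TT Θ ν 0)
    -- Ms = M* is the adjoint of M for the pairing ⟨σ,τ⟩ = S(τ)1_{σ=τ}
    (hadj : ∀ f g : TT Θ ν 0, pairT (Ms f) g = pairT f (M g))
    -- M* is a multi-pre-Lie morphism
    (hpre : ∀ (a : Θ × MIdx 0) (σ τ : DT Θ ν 0),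
      Ms (graftT a σ τ) = graftExt a (Ms (δ σ)) (Ms (δ τ))) :
    -- R* is well-defined by its values on the generators and the graft rule ...
    (∃! Rs : TT Θ ν 0 →ₗ[ℚ] TT Θ ν 0,
      (∀ l : Option ν, Rs (δ (zeta l)) = Ms (δ (zeta l))) ∧
      (∀ (a : Θ × MIdx 0) (σ τ : DT Θ ν 0),
        Rs (graftT a σ τ) = graftR a σ (Rs (δ τ)))) ∧
    -- ... and any such map is a right ⋆-morphism
    (∀ Rs : TT Θ ν 0 →ₗ[ℚ] TT Θ ν 0,
      ((∀ l : Option ν, Rs (δ (zeta l)) = Ms (δ (zeta l))) ∧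
       (∀ (a : Θ × MIdx 0) (σ τ : DT Θ ν 0),
        Rs (graftT a σ τ) = graftR a σ (Rs (δ τ)))) →
      ∀ σ τ : DT Θ ν 0, noiseFreeRoot σ → Rs (star σ τ) = starR σ (Rs (δ τ))) := by
  
  constructor
  · exact ⟨Lx (vmap Ms), ⟨Rs0_zeta Ms, Rs0_graft Ms⟩,
      fun Rs h => Rs_unique Ms Rs h.1 h.2⟩
  · intro Rs h σ τ _
    exact Rs_starmor Rs h.2 σ τ
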